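/- Define recursively T̃_0 = ς(0), M̃_1 = Σ(0), and for k ≥ 1, T̃_0 + ... + T̃_k = ς(M̃_1 + ... + M̃_k) and M̃_1 + ... + M̃_{k+1} = Σ(T̃_0 + ... + T̃_k), where ς(j) = inf{n : S^{(c)}_n = −j} and Σ(j) = Σ_{i=1}^{ς(j)} ξm_i. Then for every a ≥ 1, the chain ((T̃_k, M̃_{k+1}))_{k≥0} has the same law as the chain ((T_k, M_{k+1}))_{k≥0} of type-k population sizes and mutant counts of the Galton-Watson process with neutral mutations started from a ancestors. -/

import Mathlib

open scoped ENNReal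
open MeasureTheory ProbabilityTheory

/-- `n`-fold convolution power of a law on `ℕ × ℕ`. -/
noncomputable def convPow (π : PMF (ℕ × ℕ)) : ℕ → PMF (ℕ × ℕ)
  | 0 => PMF.pure (0, 0)
  | n + 1 => (convPow π n).bind fun s => π.map fun t => (s.1 + t.1, s.2 + t.2)

/-- `μ` is the joint law of `(T0, M1)` for the Galton-Watson process with neutral mutations,
one ancestor and offspring law `π`; under `m` ancestors it is `convPow μ m`. -/
def branchingFixedPoint (π μ : PMF (ℕ × ℕ)) : Prop :=
  μ = π.bind fun kl => (convPow μ kl.1).map fun s => (1 + s.1, kl.2 + s.2)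

open scoped Classical

namespace S8

abbrev E := ℕ × ℕ

def csum (w : ℕ → E) (n : ℕ) : ℕ := ∑ i ∈ Finset.range n, (w i).1
def msum (w : ℕ → E) (n : ℕ) : ℕ := ∑ i ∈ Finset.range n, (w i).2
def shf (w : ℕ → E) (n : ℕ) : ℕ → E := fun i => w (n + i)

lemma csum_zero (w : ℕ → E) : csum w 0 = 0 := rfl
lemma msum_zero (w : ℕ → E) : msum w 0 = 0 := rfl

lemma csum_add (w : ℕ → E) (n s : ℕ) : csum w (n + s) = csum w n + csum (shf w n) s :=
  Finset.sum_range_add _ n s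

lemma msum_add (w : ℕ → E) (n s : ℕ) : msum w (n + s) = msum w n + msum (shf w n) s :=
  Finset.sum_range_add _ n s

/-- the walk started at `c` (i.e. `n ↦ c + csum w n - n`) hits `0` for the first time at `t`. -/
def HitsAt (c t : ℕ) (w : ℕ → E) : Prop :=
  c + csum w t = t ∧ ∀ n < t, n < c + csum w n

lemma hitsAt_zero_iff (t : ℕ) (w : ℕ → E) : HitsAt 0 t w ↔ t = 0 := by
  constructor
  · rintro ⟨h1, h2⟩
    by_contra ht
    exact absurd (h2 0 (Nat.pos_of_ne_zero ht)) (by simp [csum_zero])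
  · rintro rfl
    exact ⟨by simp [csum_zero], by omega⟩

lemma hitsAt_unique {c t t' : ℕ} {w : ℕ → E} (h : HitsAt c t w) (h' : HitsAt c t' w) :
    t = t' := by
  by_contra hne
  rcases Nat.lt_or_ge t t' with hlt | hge
  · have := h'.2 t hlt; have := h.1; omega
  · have := h.2 t' (by omega); have := h'.1; omega

lemma hitsAt_cons (c k l t : ℕ) (w : ℕ → E) (v : ℕ → E)
    (hv : v 0 = (k, l)) (hw : ∀ i, v (i + 1) = w i) :
    HitsAt (c + 1) (t + 1) v ↔ HitsAt (c + k) t w := by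
  have hcs : ∀ n, csum v (n + 1) = k + csum w n := by
    intro n
    have h1 : csum v (1 + n) = csum v 1 + csum (shf v 1) n := csum_add v 1 n
    have h2 : csum (shf v 1) n = csum w n := by
      unfold csum shf
      exact Finset.sum_congr rfl (fun i _ => by rw [Nat.add_comm 1 i, hw])
    have h3 : csum v 1 = k := by simp [csum, Finset.sum_range_one, hv]
    rw [Nat.add_comm n 1, h1, h2, h3]
  constructor
  · rintro ⟨h1, h2⟩
    refine ⟨by rw [hcs] at h1; omega, fun n hn => ?_⟩
    have := h2 (n + 1) (by omega)
    rw [hcs] at this; omega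
  · rintro ⟨h1, h2⟩
    refine ⟨by rw [hcs]; omega, fun n hn => ?_⟩
    cases n with
    | zero => omega
    | succ n => rw [hcs]; have := h2 n (by omega); omega

def ext (n : ℕ) (w : Fin n → E) : ℕ → E := fun i => if h : i < n then w ⟨i, h⟩ else (0, 0)

def fcons (v : E) (w : ℕ → E) : ℕ → E
  | 0 => v
  | i + 1 => w i

def DependsOn (p : (ℕ → E) → Prop) (n : ℕ) : Prop :=
  ∀ w w', (∀ i < n, w i = w' i) → p w → p w'

noncomputable def wsum (π : PMF E) (n : ℕ) (p : (ℕ → E) → Prop) : ℝ≥0∞ :=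
  ∑' w : Fin n → E, if p (ext n w) then ∏ i, π (w i) else 0

lemma wsum_congr {π : PMF E} {n : ℕ} {p q : (ℕ → E) → Prop} (h : ∀ w, p w ↔ q w) :
    wsum π n p = wsum π n q := by
  unfold wsum; exact tsum_congr fun w => by rw [if_congr (h _) rfl rfl]

lemma wsum_zero (π : PMF E) (p : (ℕ → E) → Prop) :
    wsum π 0 p = if p (fun _ => (0, 0)) then 1 else 0 := by
  unfold wsum
  rw [tsum_eq_single (fun i : Fin 0 => (0, 0)) (fun w' hw' => absurd (funext fun i => i.elim0) hw')]
  have : ext 0 (fun _ : Fin 0 => (0, 0)) = fun _ => (0, 0) := funext fun i => dif_neg (by omega)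
  rw [this]
  simp

lemma ext_cons (n : ℕ) (v : E) (w : Fin n → E) :
    ext (n + 1) (Fin.cons v w) = fcons v (ext n w) := by
  funext i
  cases i with
  | zero => simp [ext, fcons]
  | succ i =>
    simp only [ext, fcons]
    by_cases h : i < n
    · rw [dif_pos (by omega), dif_pos h]
      exact Fin.cons_succ (α := fun _ => E) v w ⟨i, h⟩
    · rw [dif_neg (by omega), dif_neg h]

lemma wsum_succ (π : PMF E) (n : ℕ) (p : (ℕ → E) → Prop) :
    wsum π (n + 1) p = ∑' v : E, π v * wsum π n (fun w => p (fcons v w)) := by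
  unfold wsum
  rw [← Equiv.tsum_eq (Fin.consEquiv (fun _ : Fin (n+1) => E))]
  rw [ENNReal.tsum_prod']
  refine tsum_congr fun v => ?_
  rw [ENNReal.tsum_mul_left.symm]
  refine tsum_congr fun w => ?_
  have he : (Fin.consEquiv (fun _ : Fin (n+1) => E)) (v, w) = Fin.cons v w := rfl
  have hprod : ∏ i : Fin (n+1), π (Fin.cons (α := fun _ => E) v w i) = π v * ∏ i : Fin n, π (w i) := by
    rw [Fin.prod_univ_succ]
    simp [Fin.cons_zero, Fin.cons_succ]
  rw [he, ext_cons, hprod]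
  split <;> simp

lemma wsum_const_and (π : PMF E) (n : ℕ) (c : Prop) (r : (ℕ → E) → Prop) :
    wsum π n (fun w => c ∧ r w) = (if c then 1 else 0) * wsum π n r := by
  by_cases hc : c
  · rw [if_pos hc, one_mul]; exact wsum_congr fun w => by tauto
  · rw [if_neg hc, zero_mul]
    unfold wsum
    rw [ENNReal.tsum_eq_zero]
    intro w; rw [if_neg (by tauto)]

lemma DependsOn.mono {p : (ℕ → E) → Prop} {n n' : ℕ} (h : DependsOn p n) (hle : n ≤ n') :
    DependsOn p n' := fun w w' hag => h w w' fun i hi => hag i (by omega)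

lemma shf_fcons (v : E) (w : ℕ → E) (s : ℕ) : shf (fcons v w) (s + 1) = shf w s := by
  funext i
  show fcons v w (s + 1 + i) = w (s + i)
  have h : s + 1 + i = (s + i) + 1 := by omega
  rw [h]
  rfl

lemma wsum_split (π : PMF E) {n1 n2 : ℕ} {p r : (ℕ → E) → Prop}
    (hp : DependsOn p n1) :
    wsum π (n1 + n2) (fun w => p w ∧ r (shf w n1)) = wsum π n1 p * wsum π n2 r := by
  induction n1 generalizing p with
  | zero =>
    rw [Nat.zero_add, wsum_zero]
    have h1 : ∀ w : ℕ → E, (p w ∧ r (shf w 0)) ↔ (p (fun _ => (0,0)) ∧ r w) := by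
      intro w
      have hs : shf w 0 = w := funext fun i => by show w (0 + i) = w i; rw [Nat.zero_add]
      rw [hs]
      constructor
      · rintro ⟨h1, h2⟩; exact ⟨hp w _ (by omega) h1, h2⟩
      · rintro ⟨h1, h2⟩; exact ⟨hp _ w (by omega) h1, h2⟩
    rw [wsum_congr h1, wsum_const_and]
  | succ s ih =>
    have hrw : s + 1 + n2 = (s + n2) + 1 := by omega
    rw [hrw, wsum_succ, wsum_succ]
    rw [← ENNReal.tsum_mul_right]
    refine tsum_congr fun v => ?_
    rw [mul_assoc]
    congr 1
    have h1 : ∀ w : ℕ → E, (p (fcons v w) ∧ r (shf (fcons v w) (s+1)))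
        ↔ ((fun w => p (fcons v w)) w ∧ r (shf w s)) := by
      intro w; rw [shf_fcons]
    rw [wsum_congr h1]
    exact ih fun w w' hag hpw => hp _ _ (fun i hi => by
      cases i with
      | zero => rfl
      | succ i => exact hag i (by omega)) hpw

lemma wsum_partition (π : PMF E) (n : ℕ) (p : (ℕ → E) → Prop) :
    wsum π n p = ∑' m : ℕ, wsum π n (fun w => p w ∧ msum w n = m) := by
  unfold wsum
  rw [ENNReal.tsum_comm]
  refine tsum_congr fun w => ?_
  by_cases hp : p (ext n w)
  · rw [if_pos hp, tsum_eq_single (msum (ext n w) n) ?_]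
    · rw [if_pos ⟨hp, rfl⟩]
    · intro m' hm'; rw [if_neg (by tauto)]
  · rw [if_neg hp]
    exact ((tsum_congr fun m => if_neg fun h => hp h.1).trans tsum_zero).symm


lemma wsum_false (π : PMF E) (n : ℕ) (p : (ℕ → E) → Prop) (h : ∀ w, ¬ p w) :
    wsum π n p = 0 := by
  unfold wsum
  rw [ENNReal.tsum_eq_zero]
  intro w; rw [if_neg (h _)]

lemma shf_fcons_one (v : E) (w : ℕ → E) : shf (fcons v w) 1 = w := by
  funext i
  show fcons v w (1 + i) = w i
  rw [Nat.add_comm 1 i]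
  rfl

lemma msum_cons (v : E) (w : ℕ → E) (t : ℕ) : msum (fcons v w) (t + 1) = v.2 + msum w t := by
  have h := msum_add (fcons v w) 1 t
  rw [Nat.add_comm 1 t] at h
  rw [h, shf_fcons_one]
  congr 1

lemma csum_congr {w w' : ℕ → E} {t : ℕ} (hag : ∀ i < t, w i = w' i) {n : ℕ} (hn : n ≤ t) :
    csum w n = csum w' n :=
  Finset.sum_congr rfl fun i hi => by rw [hag i (by simpa using lt_of_lt_of_le (Finset.mem_range.mp hi) hn)]

lemma msum_congr {w w' : ℕ → E} {t : ℕ} (hag : ∀ i < t, w i = w' i) {n : ℕ} (hn : n ≤ t) :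
    msum w n = msum w' n :=
  Finset.sum_congr rfl fun i hi => by rw [hag i (by simpa using lt_of_lt_of_le (Finset.mem_range.mp hi) hn)]

lemma hitsAt_dependsOn (c t m : ℕ) :
    DependsOn (fun w => HitsAt c t w ∧ msum w t = m) t := by
  rintro w w' hag ⟨⟨h1, h2⟩, h3⟩
  refine ⟨⟨by rw [← csum_congr hag le_rfl]; exact h1, fun n hn => ?_⟩,
    by rw [← msum_congr hag le_rfl]; exact h3⟩
  rw [← csum_congr hag (le_of_lt hn)]
  exact h2 n hn

/-- the probability that the walk from `c` first hits `0` at time `tm.1` with mutation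
sum `tm.2`. -/
noncomputable def q (π : PMF E) (c : ℕ) (tm : E) : ℝ≥0∞ :=
  wsum π tm.1 (fun w => HitsAt c tm.1 w ∧ msum w tm.1 = tm.2)

lemma q_time_zero (π : PMF E) (c M : ℕ) :
    q π c (0, M) = if c = 0 ∧ M = 0 then 1 else 0 := by
  unfold q
  rw [wsum_zero]
  congr 1
  simp only [eq_iff_iff]
  constructor
  · rintro ⟨⟨h1, _⟩, h3⟩
    exact ⟨by simpa [csum_zero] using h1, by simpa [msum_zero] using h3.symm⟩
  · rintro ⟨rfl, rfl⟩
    exact ⟨⟨by simp [csum_zero], by omega⟩, rfl⟩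

lemma q_start_zero (π : PMF E) (T M : ℕ) :
    q π 0 (T + 1, M) = 0 := by
  unfold q
  exact wsum_false _ _ _ fun w hw => by
    have := (hitsAt_zero_iff (T+1) w).mp hw.1; omega

lemma q_succ (π : PMF E) (c T M : ℕ) :
    q π (c + 1) (T + 1, M)
      = ∑' kl : E, π kl * (if kl.2 ≤ M then q π (c + kl.1) (T, M - kl.2) else 0) := by
  unfold q
  simp only [Prod.fst, Prod.snd]
  rw [wsum_succ]
  refine tsum_congr fun v => ?_
  congr 1
  by_cases hv : v.2 ≤ M
  · rw [if_pos hv]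
    refine wsum_congr fun w => ?_
    have hc := hitsAt_cons c v.1 v.2 T w (fcons v w) (by rfl) (fun i => rfl)
    have hm := msum_cons v w T
    constructor
    · rintro ⟨h1, h2⟩
      exact ⟨hc.mp h1, by rw [hm] at h2; omega⟩
    · rintro ⟨h1, h2⟩
      exact ⟨hc.mpr h1, by rw [hm]; omega⟩
  · rw [if_neg hv]
    refine wsum_false _ _ _ fun w hw => ?_
    have := msum_cons v w T
    have := hw.2
    omega

/-! ### PMF convolution algebra -/

noncomputable def pmul (p r : PMF E) : PMF E :=
  p.bind fun s => r.map fun u => (s.1 + u.1, s.2 + u.2)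

lemma pmul_def (p r : PMF E) :
    pmul p r = p.bind fun s => r.bind fun u => PMF.pure (s.1 + u.1, s.2 + u.2) := by
  unfold pmul PMF.map
  rfl

lemma pmul_comm (p r : PMF E) : pmul p r = pmul r p := by
  rw [pmul_def, pmul_def, PMF.bind_comm]
  congr 1
  funext u
  congr 1
  funext s
  rw [Nat.add_comm s.1 u.1, Nat.add_comm s.2 u.2]

lemma pmul_assoc (p r s : PMF E) : pmul (pmul p r) s = pmul p (pmul r s) := by
  simp only [pmul_def, PMF.bind_bind, PMF.pure_bind, Nat.add_assoc]

lemma pmul_bind (p : PMF E) (f : E → PMF E) (r : PMF E) :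
    pmul (p.bind f) r = p.bind fun a => pmul (f a) r := by
  rw [pmul_def, PMF.bind_bind]
  congr 1

lemma pmul_pure_left (x : E) (p : PMF E) :
    pmul (PMF.pure x) p = p.map fun u => (x.1 + u.1, x.2 + u.2) := by
  unfold pmul
  rw [PMF.pure_bind]

lemma convPow_succ' (μ : PMF E) (n : ℕ) : convPow μ (n + 1) = pmul (convPow μ n) μ := rfl

lemma convPow_add_pmul (μ : PMF E) (x y : ℕ) :
    convPow μ (x + y) = pmul (convPow μ x) (convPow μ y) := by
  induction y with
  | zero =>
    show convPow μ x = pmul (convPow μ x) (PMF.pure (0, 0))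
    rw [pmul_comm, pmul_pure_left]
    conv_lhs => rw [show convPow μ x = (convPow μ x).map id from (PMF.map_id _).symm]
    congr 1
    funext u
    simp
  | succ y ih =>
    rw [show x + (y + 1) = (x + y) + 1 from rfl, convPow_succ', convPow_succ', ih, pmul_assoc]


lemma convPow_one (μ : PMF E) : convPow μ 1 = μ := by
  show pmul (PMF.pure (0, 0)) μ = μ
  rw [pmul_pure_left]
  conv_rhs => rw [show μ = μ.map id from (PMF.map_id _).symm]
  congr 1
  funext u
  simp

lemma mu_fst_zero {π μ : PMF E} (hb : branchingFixedPoint π μ) (x : ℕ) : μ (0, x) = 0 := by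
  conv_lhs => rw [hb]
  rw [PMF.bind_apply]
  rw [ENNReal.tsum_eq_zero]
  intro kl
  refine mul_eq_zero_of_right _ ?_
  rw [PMF.map_apply, ENNReal.tsum_eq_zero]
  intro s
  rw [if_neg]
  intro h
  rw [Prod.ext_iff] at h
  exact absurd h.1 (by omega)

lemma convPow_time_zero {π μ : PMF E} (hb : branchingFixedPoint π μ) (c M : ℕ) :
    convPow μ c (0, M) = if c = 0 ∧ M = 0 then 1 else 0 := by
  cases c with
  | zero =>
    show (PMF.pure ((0:ℕ), (0:ℕ))) (0, M) = _
    rw [PMF.pure_apply]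
    by_cases hM : M = 0
    · subst hM; rw [if_pos rfl, if_pos ⟨rfl, rfl⟩]
    · rw [if_neg (by simp [Prod.ext_iff, hM]), if_neg (by tauto)]
  | succ c =>
    rw [if_neg (by omega)]
    show ((convPow μ c).bind fun s => μ.map fun t => (s.1 + t.1, s.2 + t.2)) (0, M) = 0
    rw [PMF.bind_apply, ENNReal.tsum_eq_zero]
    intro s
    refine mul_eq_zero_of_right _ ?_
    rw [PMF.map_apply, ENNReal.tsum_eq_zero]
    intro u
    by_cases h : ((0:ℕ), M) = (s.1 + u.1, s.2 + u.2)
    · rw [if_pos h]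
      rw [Prod.ext_iff] at h
      have hu : u = (0, u.2) := by
        rw [Prod.ext_iff]; exact ⟨by omega, rfl⟩
      rw [hu, mu_fst_zero hb]
    · rw [if_neg h]

lemma map_shift_eq (l : ℕ) (p : PMF E) :
    (p.map fun s => (1 + s.1, l + s.2)) = pmul (PMF.pure ((1:ℕ), l)) p := by
  rw [pmul_pure_left]

lemma convPow_peel {π μ : PMF E} (hb : branchingFixedPoint π μ) (c T M : ℕ) :
    convPow μ (c + 1) (T + 1, M)
      = ∑' kl : E, π kl * (if kl.2 ≤ M then convPow μ (c + kl.1) (T, M - kl.2) else 0) := by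
  have h1 : convPow μ (c + 1) = π.bind fun kl => pmul (PMF.pure (1, kl.2)) (convPow μ (kl.1 + c)) := by
    have h2 : convPow μ (c + 1) = pmul μ (convPow μ c) := by
      rw [Nat.add_comm c 1, convPow_add_pmul, convPow_one]
    rw [h2]
    nth_rewrite 1 [hb]
    rw [pmul_bind]
    congr 1
    funext kl
    rw [map_shift_eq, pmul_assoc, ← convPow_add_pmul]
  rw [h1, PMF.bind_apply]
  refine tsum_congr fun kl => ?_
  congr 1
  rw [← map_shift_eq, PMF.map_apply]
  by_cases hm : kl.2 ≤ M
  · rw [if_pos hm]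
    rw [tsum_eq_single ((T, M - kl.2) : E)]
    · rw [if_pos (by rw [Prod.ext_iff]; exact ⟨by simp [Nat.add_comm], by simp; omega⟩), Nat.add_comm c kl.1]
    · intro s hs
      rw [if_neg]
      intro h
      rw [Prod.ext_iff] at h
      simp only at h
      exact hs (by rw [Prod.ext_iff]; exact ⟨by omega, by omega⟩)
  · rw [if_neg hm, ENNReal.tsum_eq_zero]
    intro s
    rw [if_neg]
    intro h
    rw [Prod.ext_iff] at h
    simp only at h
    omega

lemma q_eq_convPow {π μ : PMF E} (hb : branchingFixedPoint π μ) :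
    ∀ T c M, q π c (T, M) = convPow μ c (T, M) := by
  intro T
  induction T with
  | zero => intro c M; rw [q_time_zero, convPow_time_zero hb]
  | succ T ih =>
    intro c M
    cases c with
    | zero =>
      rw [q_start_zero]
      symm
      show (PMF.pure ((0:ℕ), (0:ℕ))) (T + 1, M) = 0
      rw [PMF.pure_apply, if_neg (by rw [Prod.ext_iff]; rintro ⟨h, -⟩; exact absurd h (by omega))]
    | succ c =>
      rw [q_succ, convPow_peel hb]
      refine tsum_congr fun kl => ?_
      congr 1
      split
      · exact ih _ _
      · rfl

lemma q_mass {π μ : PMF E} (hb : branchingFixedPoint π μ) (c : ℕ) :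
    ∑' tm : E, q π c tm = 1 := by
  have h : ∀ tm : E, q π c tm = convPow μ c tm := fun tm => by
    rcases tm with ⟨T, M⟩; exact q_eq_convPow hb T c M
  rw [tsum_congr h]
  exact (convPow μ c).tsum_coe


section Measure

variable {Ω : Type*} [MeasurableSpace Ω] {P : Measure Ω} [IsProbabilityMeasure P]
  {π : PMF E} {ξ : ℕ → Ω → E}

omit [IsProbabilityMeasure P] in
lemma meas_cyl (hmeas : ∀ i, Measurable (ξ i))
    (hindep : iIndepFun ξ P)
    (hdist : ∀ i, Measure.map (ξ i) P = π.toMeasure)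
    (n : ℕ) (v : ℕ → E) :
    P (⋂ i ∈ Finset.range n, ξ i ⁻¹' {v i}) = ∏ i ∈ Finset.range n, π (v i) := by
  rw [hindep.measure_inter_preimage_eq_mul (Finset.range n) (sets := fun i => {v i})
    (fun i _ => measurableSet_singleton _)]
  refine Finset.prod_congr rfl fun i _ => ?_
  rw [← Measure.map_apply (hmeas i) (measurableSet_singleton _), hdist i,
    PMF.toMeasure_apply_singleton _ _ (measurableSet_singleton _)]

lemma ext_lt (n : ℕ) (w : Fin n → E) {i : ℕ} (h : i < n) : ext n w i = w ⟨i, h⟩ := dif_pos h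

lemma meas_event (hmeas : ∀ i, Measurable (ξ i))
    (hindep : iIndepFun ξ P)
    (hdist : ∀ i, Measure.map (ξ i) P = π.toMeasure)
    (n : ℕ) (p : (ℕ → E) → Prop) (hdep : DependsOn p n) :
    P {ω | p (fun i => ξ i ω)} = wsum π n p := by
  set Cyl : (Fin n → E) → Set Ω := fun w => ⋂ i ∈ Finset.range n, ξ i ⁻¹' {ext n w i} with hCyl
  have hmem : ∀ (w : Fin n → E) (ω : Ω), ω ∈ Cyl w ↔ ∀ i < n, ξ i ω = ext n w i := by
    intro w ω
    simp [hCyl, Set.mem_iInter]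
  have hCylmeas : ∀ w, MeasurableSet (Cyl w) := fun w =>
    MeasurableSet.biInter (Set.to_countable _) fun i _ => (hmeas i) (measurableSet_singleton _)
  have hset : {ω | p (fun i => ξ i ω)}
      = ⋃ w : ↥{w : Fin n → E | p (ext n w)}, Cyl w.1 := by
    ext ω
    simp only [Set.mem_setOf_eq, Set.mem_iUnion]
    constructor
    · intro hp
      refine ⟨⟨fun i => ξ i.1 ω, ?_⟩, ?_⟩
      · exact hdep _ _ (fun i hi => by rw [ext_lt n _ hi]) hp
      · rw [hmem]
        intro i hi
        rw [ext_lt n _ hi]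
    · rintro ⟨⟨w, hw⟩, hmemw⟩
      rw [hmem] at hmemw
      exact hdep _ _ (fun i hi => (hmemw i hi).symm) hw
  have hdisj : Pairwise fun (w w' : ↥{w : Fin n → E | p (ext n w)}) => Disjoint (Cyl w.1) (Cyl w'.1) := by
    intro w w' hne
    rw [Set.disjoint_left]
    intro ω hω hω'
    rw [hmem] at hω hω'
    refine hne (Subtype.ext (funext fun i => ?_))
    have h1 := hω i.1 i.2
    have h2 := hω' i.1 i.2
    rw [ext_lt n _ i.2] at h1 h2
    rw [Fin.eta] at h1 h2
    rw [← h1, ← h2]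
  rw [hset, measure_iUnion hdisj fun w => hCylmeas w.1]
  rw [tsum_subtype {w : Fin n → E | p (ext n w)} (fun w => P (Cyl w))]
  unfold wsum
  refine tsum_congr fun w => ?_
  rw [Set.indicator_apply]
  by_cases hpw : p (ext n w)
  · rw [if_pos hpw, if_pos (show w ∈ {w : Fin n → E | p (ext n w)} from hpw)]
    rw [meas_cyl hmeas hindep hdist n (ext n w), ← Fin.prod_univ_eq_prod_range]
    refine Finset.prod_congr rfl fun i _ => ?_
    rw [ext_lt n _ i.2, Fin.eta]
  · rw [if_neg hpw, if_neg (show ¬ w ∈ {w : Fin n → E | p (ext n w)} from hpw)]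

end Measure


/-! ### deterministic walk lemmas -/

lemma ivt_word {b : ℕ} {w : ℕ → E} : ∀ n, b + csum w n ≤ n → ∃ n' ≤ n, b + csum w n' = n' := by
  intro n
  induction n with
  | zero => intro h; exact ⟨0, le_rfl, by omega⟩
  | succ n ih =>
    intro h
    have hmono : csum w n ≤ csum w (n + 1) := by
      unfold csum; rw [Finset.sum_range_succ]; omega
    by_cases he : b + csum w (n + 1) = n + 1
    · exact ⟨n + 1, le_rfl, he⟩
    · obtain ⟨n', hn', he'⟩ := ih (by omega)
      exact ⟨n', by omega, he'⟩

lemma hitsAt_glue {b c t1 t2 : ℕ} {w : ℕ → E}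
    (h1 : HitsAt b t1 w) (h2 : HitsAt c t2 (shf w t1)) : HitsAt (b + c) (t1 + t2) w := by
  obtain ⟨h1e, h1l⟩ := h1
  obtain ⟨h2e, h2l⟩ := h2
  refine ⟨by rw [csum_add]; omega, fun n hn => ?_⟩
  by_cases hcase : n < t1
  · have := h1l n hcase; omega
  · obtain ⟨s, rfl⟩ : ∃ s, n = t1 + s := ⟨n - t1, by omega⟩
    have hs : s < t2 := by omega
    have h2s := h2l s hs
    rw [csum_add]
    omega

lemma hitsAt_split {b c t1 T : ℕ} {w : ℕ → E}
    (h1 : HitsAt b t1 w) (h2 : HitsAt (b + c) T w) :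
    t1 ≤ T ∧ HitsAt c (T - t1) (shf w t1) := by
  obtain ⟨h1e, h1l⟩ := h1
  obtain ⟨h2e, h2l⟩ := h2
  have hle : t1 ≤ T := by
    by_contra hlt
    have := h1l T (by omega)
    omega
  refine ⟨hle, ?_, ?_⟩
  · have := csum_add w t1 (T - t1)
    rw [show t1 + (T - t1) = T by omega] at this
    omega
  · intro n hn
    have := h2l (t1 + n) (by omega)
    have hadd := csum_add w t1 n
    omega

lemma sInf_hit_eq {b tt : ℕ} {w : ℕ → E} (h : HitsAt b tt w) :
    sInf {n : ℕ | b + csum w n = n} = tt := by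
  have hmem : tt ∈ {n : ℕ | b + csum w n = n} := h.1
  refine le_antisymm (Nat.sInf_le hmem) ?_
  by_contra hlt
  push_neg at hlt
  have hsmem := Nat.sInf_mem (⟨tt, hmem⟩ : {n : ℕ | b + csum w n = n}.Nonempty)
  have := h.2 _ hlt
  exact absurd hsmem.symm (by omega)

lemma sInf_hit_of_mem {b : ℕ} {w : ℕ → E} (hne : ∃ N, b + csum w N = N) :
    HitsAt b (sInf {n : ℕ | b + csum w n = n}) w := by
  have hsmem := Nat.sInf_mem (hne : {n : ℕ | b + csum w n = n}.Nonempty)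
  refine ⟨hsmem, fun n hn => ?_⟩
  by_contra hle
  push_neg at hle
  obtain ⟨n', hn', he'⟩ := ivt_word n hle
  have := Nat.sInf_le (show n' ∈ {n : ℕ | b + csum w n = n} from he')
  omega

lemma hitsAt_dep (b tt : ℕ) : DependsOn (fun w => HitsAt b tt w) tt := by
  rintro w w' hag ⟨h1, h2⟩
  exact ⟨by rw [← csum_congr hag le_rfl]; exact h1,
    fun n hn => by rw [← csum_congr hag (le_of_lt hn)]; exact h2 n hn⟩

section Measure2

variable {Ω : Type*} [MeasurableSpace Ω] {P : Measure Ω} [IsProbabilityMeasure P]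
  {π μ : PMF E} {ξ : ℕ → Ω → E}

omit [IsProbabilityMeasure P] in
lemma event_meas (hmeas : ∀ i, Measurable (ξ i))
    (n : ℕ) (p : (ℕ → E) → Prop) (hdep : DependsOn p n) :
    MeasurableSet {ω | p (fun i => ξ i ω)} := by
  have hset : {ω | p (fun i => ξ i ω)}
      = ⋃ w : ↥{w : Fin n → E | p (ext n w)}, ⋂ i ∈ Finset.range n, ξ i ⁻¹' {ext n w.1 i} := by
    ext ω
    simp only [Set.mem_setOf_eq, Set.mem_iUnion, Set.mem_iInter, Set.mem_preimage,
      Set.mem_singleton_iff, Finset.mem_range]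
    constructor
    · intro hp
      exact ⟨⟨fun i => ξ i.1 ω, hdep _ _ (fun i hi => by rw [ext_lt n _ hi]) hp⟩,
        fun i hi => by rw [ext_lt n _ hi]⟩
    · rintro ⟨⟨w, hw⟩, hmemw⟩
      exact hdep _ _ (fun i hi => (hmemw i hi).symm) hw
  rw [hset]
  exact MeasurableSet.iUnion fun w =>
    MeasurableSet.biInter (Set.to_countable _) fun i _ =>
      (hmeas i) (measurableSet_singleton _)

lemma nohit_null (hb : branchingFixedPoint π μ)
    (hmeas : ∀ i, Measurable (ξ i))
    (hindep : iIndepFun ξ P)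
    (hdist : ∀ i, Measure.map (ξ i) P = π.toMeasure)
    (b : ℕ) :
    P {ω | ∀ N, b + csum (fun i => ξ i ω) N ≠ N} = 0 := by
  have hkey : {ω : Ω | ∀ N, b + csum (fun i => ξ i ω) N ≠ N}
      = (⋃ tt : ℕ, {ω : Ω | HitsAt b tt (fun i => ξ i ω)})ᶜ := by
    ext ω
    simp only [Set.mem_setOf_eq, Set.mem_compl_iff, Set.mem_iUnion, not_exists]
    constructor
    · intro hno tt htt
      exact hno tt htt.1
    · intro hno N hN
      have hne : ∃ N', b + csum (fun i => ξ i ω) N' = N' := ⟨N, hN⟩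
      exact hno _ (sInf_hit_of_mem hne)
  rw [hkey]
  have hmeasU : ∀ tt : ℕ, MeasurableSet {ω : Ω | HitsAt b tt (fun i => ξ i ω)} :=
    fun tt => event_meas hmeas tt _ (hitsAt_dep b tt)
  have hdisj : Pairwise fun tt tt' => Disjoint {ω : Ω | HitsAt b tt (fun i => ξ i ω)}
      {ω : Ω | HitsAt b tt' (fun i => ξ i ω)} := by
    intro tt tt' hne
    rw [Set.disjoint_left]
    intro ω h1 h2
    exact hne (hitsAt_unique h1 h2)
  have hone : P (⋃ tt : ℕ, {ω : Ω | HitsAt b tt (fun i => ξ i ω)}) = 1 := by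
    rw [measure_iUnion hdisj hmeasU]
    have heach : ∀ tt : ℕ, P {ω : Ω | HitsAt b tt (fun i => ξ i ω)}
        = ∑' mm : ℕ, q π b (tt, mm) := by
      intro tt
      rw [meas_event hmeas hindep hdist tt _ (hitsAt_dep b tt)]
      rw [wsum_partition]
      rfl
    rw [tsum_congr heach]
    have := q_mass (π := π) hb b
    rw [ENNReal.tsum_prod'] at this
    exact this
  rw [prob_compl_eq_one_sub (MeasurableSet.iUnion hmeasU), hone, tsub_self]

end Measure2


/-! ### block structure -/

def AA (a : ℕ) (m : ℕ → ℕ) : ℕ → ℕ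
  | 0 => a
  | j + 1 => m j

def NNf (t : ℕ → ℕ) : ℕ → ℕ
  | 0 => 0
  | j + 1 => NNf t j + t j

def MMf (m : ℕ → ℕ) : ℕ → ℕ
  | 0 => 0
  | j + 1 => MMf m j + m j

def Phi (a : ℕ) (t m : ℕ → ℕ) (k : ℕ) (w : ℕ → E) : Prop :=
  ∀ j ≤ k, HitsAt (AA a m j) (t j) (shf w (NNf t j)) ∧ msum (shf w (NNf t j)) (t j) = m j

lemma shf_zero (w : ℕ → E) : shf w 0 = w := funext fun i => congrArg w (Nat.zero_add i)

lemma NNf_mono (t : ℕ → ℕ) : Monotone (NNf t) :=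
  monotone_nat_of_le_succ fun n => Nat.le_add_right (NNf t n) (t n)

lemma Phi_dep (a : ℕ) (t m : ℕ → ℕ) (k : ℕ) : DependsOn (Phi a t m k) (NNf t (k + 1)) := by
  intro w w' hag hw j hj
  have hsub : ∀ i < t j, shf w (NNf t j) i = shf w' (NNf t j) i := by
    intro i hi
    apply hag
    have h1 : NNf t j + i < NNf t (j + 1) := by
      have : NNf t (j + 1) = NNf t j + t j := rfl
      omega
    exact lt_of_lt_of_le h1 (NNf_mono t (by omega))
  obtain ⟨h1, h2⟩ := hw j hj
  exact ⟨hitsAt_dep _ _ _ _ hsub h1, by rw [← msum_congr hsub le_rfl]; exact h2⟩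

lemma wsum_Phi (π : PMF E) (a : ℕ) (t m : ℕ → ℕ) :
    ∀ k, wsum π (NNf t (k + 1)) (Phi a t m k)
      = q π a (t 0, m 0) * ∏ i ∈ Finset.range k, q π (m i) (t (i + 1), m (i + 1)) := by
  intro k
  induction k with
  | zero =>
    rw [Finset.range_zero, Finset.prod_empty, mul_one]
    have h0 : NNf t 1 = t 0 := Nat.zero_add (t 0)
    rw [h0]
    refine wsum_congr fun w => ?_
    unfold Phi
    constructor
    · intro h
      obtain ⟨h1, h2⟩ := h 0 le_rfl
      rw [show NNf t 0 = 0 from rfl, shf_zero] at h1 h2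
      exact ⟨h1, h2⟩
    · rintro ⟨h1, h2⟩ j hj
      interval_cases j
      rw [show NNf t 0 = 0 from rfl, shf_zero]
      exact ⟨h1, h2⟩
  | succ k ih =>
    have hiff : ∀ w, Phi a t m (k + 1) w ↔ (Phi a t m k w ∧
        (HitsAt (AA a m (k + 1)) (t (k + 1)) (shf w (NNf t (k + 1)))
          ∧ msum (shf w (NNf t (k + 1))) (t (k + 1)) = m (k + 1))) := by
      intro w
      constructor
      · intro h
        exact ⟨fun j hj => h j (by omega), h (k + 1) le_rfl⟩
      · rintro ⟨h1, h2⟩ j hj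
        rcases Nat.lt_or_ge j (k + 1) with hlt | hge
        · exact h1 j (by omega)
        · have : j = k + 1 := by omega
          subst this
          exact h2
    have hs := wsum_split π (n2 := t (k + 1))
      (r := fun w' => HitsAt (AA a m (k + 1)) (t (k + 1)) w'
        ∧ msum w' (t (k + 1)) = m (k + 1)) (Phi_dep a t m k)
    rw [show NNf t (k + 2) = NNf t (k + 1) + t (k + 1) from rfl, wsum_congr hiff, hs, ih,
      Finset.prod_range_succ]
    show _ = q π a (t 0, m 0) * (_ * q π (m k) (t (k + 1), m (k + 1)))
    rw [mul_assoc]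
    rfl


end S8

open S8

/-- with `ς(j)` the first hitting time of `-j` by the walk
`S n = a + ξc₁ + ⋯ + ξcₙ - n` and `Σ(n) = ξm₁ + ⋯ + ξmₙ`, define recursively the cumulative
sequences `cM 0 = 0`, `cT k = ς(cM k)`, `cM (k+1) = Σ(cT k)`, and set
`T̃_0 = cT 0`, `T̃_{k+1} = cT(k+1) - cT k`, `M̃_{k+1} = cM(k+1) - cM k`.  Then the chain
`((T̃_k, M̃_{k+1}))_{k≥0}` has the same law as the chain `((T_k, M_{k+1}))_{k≥0}` of the
Galton-Watson process with neutral mutations started from `a` ancestors, i.e. the Markov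
chain with initial law `convPow μ a` and transition kernel `(t,m) ↦ convPow μ m`. -/
theorem stmt8 {Ω : Type*} [MeasurableSpace Ω] (P : Measure Ω) [IsProbabilityMeasure P]
    (π μ : PMF (ℕ × ℕ))
    (hb : branchingFixedPoint π μ)
    (hsub : ∑' kl : ℕ × ℕ, π kl * (kl.1 : ℝ≥0∞) ≤ 1)
    (ξ : ℕ → Ω → ℕ × ℕ)
    (hmeas : ∀ i, Measurable (ξ i))
    (hindep : iIndepFun ξ P)
    (hdist : ∀ i, Measure.map (ξ i) P = π.toMeasure)
    (a : ℕ) (ha : 1 ≤ a)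
    (S : ℕ → Ω → ℤ)
    (hS : ∀ n ω, S n ω = (a : ℤ) + (∑ i ∈ Finset.range n, ((ξ i ω).1 : ℤ)) - n)
    (cM cT : ℕ → Ω → ℕ)
    (hcM0 : ∀ ω, cM 0 ω = 0)
    (hcT : ∀ k ω, cT k ω = sInf {n : ℕ | S n ω = -(cM k ω : ℤ)})
    (hcMs : ∀ k ω, cM (k + 1) ω = ∑ i ∈ Finset.range (cT k ω), (ξ i ω).2)
    (Ttil Mtil : ℕ → Ω → ℕ)
    (hT0 : ∀ ω, Ttil 0 ω = cT 0 ω)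
    (hTs : ∀ k ω, Ttil (k + 1) ω = cT (k + 1) ω - cT k ω)
    (hMs : ∀ k ω, Mtil (k + 1) ω = cM (k + 1) ω - cM k ω) :
    ∀ (k : ℕ) (t m : ℕ → ℕ),
      P {ω | ∀ i ≤ k, Ttil i ω = t i ∧ Mtil (i + 1) ω = m i}
        = (convPow μ a) (t 0, m 0)
            * ∏ i ∈ Finset.range k, (convPow μ (m i)) (t (i + 1), m (i + 1)) := by
  intro k t m
  classical
  have hW : ∀ (ω : Ω) (n : ℕ), (∑ i ∈ Finset.range n, ((ξ i ω).1 : ℤ))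
      = ((csum (fun i => ξ i ω) n : ℕ) : ℤ) := by
    intro ω n; unfold S8.csum; push_cast; rfl
  have hSet : ∀ (ω : Ω) (c : ℕ), {n : ℕ | S n ω = -((c : ℕ) : ℤ)}
      = {n : ℕ | (a + c) + csum (fun i => ξ i ω) n = n} := by
    intro ω c
    ext n
    simp only [Set.mem_setOf_eq, hS n ω, hW ω n]
    omega
  have hmsum : ∀ (ω : Ω) (n : ℕ), msum (fun i => ξ i ω) n
      = ∑ i ∈ Finset.range n, (ξ i ω).2 := fun ω n => rfl
  -- Claim 1 : the combinatorial event implies the probabilistic one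
  have claim1 : ∀ ω : Ω, Phi a t m k (fun i => ξ i ω) →
      ∀ i ≤ k, Ttil i ω = t i ∧ Mtil (i + 1) ω = m i := by
    intro ω hw
    have hglob : ∀ j ≤ k, HitsAt (a + MMf m j) (NNf t (j + 1)) (fun i => ξ i ω)
        ∧ msum (fun i => ξ i ω) (NNf t (j + 1)) = MMf m (j + 1) := by
      intro j
      induction j with
      | zero =>
        intro _
        obtain ⟨h1, h2⟩ := hw 0 (by omega)
        rw [show NNf t 0 = 0 from rfl, shf_zero] at h1 h2
        constructor
        · rw [show NNf t 1 = t 0 from Nat.zero_add (t 0)]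
          exact h1
        · rw [show NNf t 1 = t 0 from Nat.zero_add (t 0),
            show MMf m 1 = m 0 from Nat.zero_add (m 0)]
          exact h2
      | succ j ihj =>
        intro hjk
        obtain ⟨hg, hmj⟩ := ihj (by omega)
        obtain ⟨h1, h2⟩ := hw (j + 1) hjk
        have hMM' : MMf m (j + 1) = MMf m j + m j := rfl
        have hglue := hitsAt_glue hg h1
        constructor
        · rw [show a + MMf m (j + 1) = a + MMf m j + AA a m (j + 1) from by
            rw [show AA a m (j + 1) = m j from rfl]; omega,
            show NNf t (j + 2) = NNf t (j + 1) + t (j + 1) from rfl]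
          exact hglue
        · rw [show NNf t (j + 2) = NNf t (j + 1) + t (j + 1) from rfl, msum_add, hmj,
            show MMf m (j + 2) = MMf m (j + 1) + m (j + 1) from rfl, h2]
    have hcMT : ∀ j ≤ k, cM j ω = MMf m j ∧ cT j ω = NNf t (j + 1) := by
      intro j
      induction j with
      | zero =>
        intro _
        refine ⟨hcM0 ω, ?_⟩
        rw [hcT 0 ω, hcM0 ω, hSet ω 0]
        exact sInf_hit_eq (hglob 0 (by omega)).1
      | succ j ihj =>
        intro hjk
        obtain ⟨hcMj, hcTj⟩ := ihj (by omega)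
        have hcM1 : cM (j + 1) ω = MMf m (j + 1) := by
          rw [hcMs j ω, ← hmsum ω, hcTj]
          exact (hglob j (by omega)).2
        refine ⟨hcM1, ?_⟩
        rw [hcT (j + 1) ω, hcM1, hSet ω (MMf m (j + 1))]
        exact sInf_hit_eq (hglob (j + 1) hjk).1
    have hcMtop : ∀ i ≤ k, cM (i + 1) ω = MMf m (i + 1) := by
      intro i hi
      rw [hcMs i ω, ← hmsum ω, (hcMT i hi).2]
      exact (hglob i hi).2
    intro i hi
    constructor
    · cases i with
      | zero =>
        rw [hT0 ω, (hcMT 0 (by omega)).2, show NNf t 1 = t 0 from Nat.zero_add (t 0)]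
      | succ i =>
        rw [hTs i ω, (hcMT (i + 1) hi).2, (hcMT i (by omega)).2,
          show NNf t (i + 2) = NNf t (i + 1) + t (i + 1) from rfl]
        omega
    · rw [hMs i ω, hcMtop i hi, (hcMT i (by omega)).1,
        show MMf m (i + 1) = MMf m i + m i from rfl]
      omega
  -- Claim 2 : the probabilistic event implies the combinatorial one, provided all levels are hit
  have claim2 : ∀ ω : Ω, (∀ i ≤ k, Ttil i ω = t i ∧ Mtil (i + 1) ω = m i) →
      (∀ c : ℕ, ∃ N, (a + c) + csum (fun i => ξ i ω) N = N) →
      Phi a t m k (fun i => ξ i ω) := by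
    intro ω hE hits
    have D : ∀ j ≤ k, cM j ω = MMf m j
        ∧ msum (fun i => ξ i ω) (NNf t (j + 1)) = MMf m (j + 1)
        ∧ cT j ω = NNf t (j + 1)
        ∧ HitsAt (a + MMf m j) (NNf t (j + 1)) (fun i => ξ i ω)
        ∧ HitsAt (AA a m j) (t j) (shf (fun i => ξ i ω) (NNf t j))
        ∧ msum (shf (fun i => ξ i ω) (NNf t j)) (t j) = m j := by
      intro j
      induction j with
      | zero =>
        intro _
        have hset0 : cT 0 ω = sInf {n : ℕ | (a + 0) + csum (fun i => ξ i ω) n = n} := by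
          rw [hcT 0 ω, hcM0 ω, hSet ω 0]
        have hhit0 : HitsAt (a + 0) (cT 0 ω) (fun i => ξ i ω) := by
          rw [hset0]; exact sInf_hit_of_mem (hits 0)
        have hct0 : cT 0 ω = t 0 := by
          rw [← (hE 0 (by omega)).1, hT0 ω]
        have hNN1 : NNf t 1 = t 0 := Nat.zero_add (t 0)
        have hcT0' : cT 0 ω = NNf t 1 := by omega
        have hcM1 : cM 1 ω = msum (fun i => ξ i ω) (t 0) := by
          rw [hcMs 0 ω, ← hmsum ω, hct0]
        have hms0 : msum (fun i => ξ i ω) (t 0) = m 0 := by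
          have h1 := (hE 0 (by omega)).2
          rw [hMs 0 ω, hcM1, hcM0 ω] at h1
          omega
        refine ⟨hcM0 ω, ?_, hcT0', ?_, ?_, ?_⟩
        · rw [hNN1, hms0, show MMf m 1 = m 0 from Nat.zero_add (m 0)]
        · rw [← hcT0']; exact hhit0
        · rw [show NNf t 0 = 0 from rfl, shf_zero, ← hct0]
          exact hhit0
        · rw [show NNf t 0 = 0 from rfl, shf_zero]
          exact hms0
      | succ j ihj =>
        intro hjk
        obtain ⟨hcMj, hmsj, hcTj, hgj, _, _⟩ := ihj (by omega)
        have hcM1 : cM (j + 1) ω = MMf m (j + 1) := by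
          rw [hcMs j ω, ← hmsum ω, hcTj]
          exact hmsj
        have hsetj : cT (j + 1) ω
            = sInf {n : ℕ | (a + MMf m (j + 1)) + csum (fun i => ξ i ω) n = n} := by
          rw [hcT (j + 1) ω, hcM1, hSet ω (MMf m (j + 1))]
        have hσ : HitsAt (a + MMf m (j + 1)) (cT (j + 1) ω) (fun i => ξ i ω) := by
          rw [hsetj]; exact sInf_hit_of_mem (hits _)
        have hσ' : HitsAt ((a + MMf m j) + m j) (cT (j + 1) ω) (fun i => ξ i ω) := by
          rw [show (a + MMf m j) + m j = a + MMf m (j + 1) from by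
            rw [show MMf m (j + 1) = MMf m j + m j from rfl]; omega]
          exact hσ
        obtain ⟨hle, hloc⟩ := hitsAt_split hgj hσ'
        have hTt : cT (j + 1) ω - NNf t (j + 1) = t (j + 1) := by
          rw [← hcTj, ← hTs j ω]
          exact (hE (j + 1) hjk).1
        have hNN : NNf t (j + 2) = NNf t (j + 1) + t (j + 1) := rfl
        have hcT1 : cT (j + 1) ω = NNf t (j + 2) := by omega
        have hmadd : msum (fun i => ξ i ω) (NNf t (j + 2))
            = MMf m (j + 1) + msum (shf (fun i => ξ i ω) (NNf t (j + 1))) (t (j + 1)) := by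
          rw [hNN, msum_add, hmsj]
        have hms1 : msum (shf (fun i => ξ i ω) (NNf t (j + 1))) (t (j + 1)) = m (j + 1) := by
          have h1 := (hE (j + 1) hjk).2
          rw [hMs (j + 1) ω, hcMs (j + 1) ω, ← hmsum ω, hcT1, hcM1, hmadd] at h1
          omega
        refine ⟨hcM1, ?_, hcT1, ?_, ?_, ?_⟩
        · rw [hmadd, hms1, show MMf m (j + 2) = MMf m (j + 1) + m (j + 1) from rfl]
        · rw [← hcT1]; exact hσ
        · rw [show AA a m (j + 1) = m j from rfl, ← hTt]
          exact hloc
        · exact hms1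
    intro j hj
    exact ⟨(D j hj).2.2.2.2.1, (D j hj).2.2.2.2.2⟩
  -- assembly
  have hPeq : P {ω | Phi a t m k (fun i => ξ i ω)} = wsum π (NNf t (k + 1)) (Phi a t m k) :=
    meas_event hmeas hindep hdist _ _ (Phi_dep a t m k)
  have hnull : P (⋃ c : ℕ, {ω : Ω | ∀ N, (a + c) + csum (fun i => ξ i ω) N ≠ N}) = 0 :=
    measure_iUnion_null fun c => nohit_null hb hmeas hindep hdist (a + c)
  have hEsub : {ω : Ω | ∀ i ≤ k, Ttil i ω = t i ∧ Mtil (i + 1) ω = m i}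
      ⊆ {ω | Phi a t m k (fun i => ξ i ω)}
        ∪ ⋃ c : ℕ, {ω : Ω | ∀ N, (a + c) + csum (fun i => ξ i ω) N ≠ N} := by
    intro ω hω
    by_cases hhit : ∀ c : ℕ, ∃ N, (a + c) + csum (fun i => ξ i ω) N = N
    · exact Or.inl (claim2 ω hω hhit)
    · push_neg at hhit
      obtain ⟨c, hc⟩ := hhit
      exact Or.inr (Set.mem_iUnion.mpr ⟨c, hc⟩)
  have hPE : P {ω : Ω | ∀ i ≤ k, Ttil i ω = t i ∧ Mtil (i + 1) ω = m i}
      = P {ω | Phi a t m k (fun i => ξ i ω)} := by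
    refine le_antisymm ?_ (measure_mono fun ω hω => claim1 ω hω)
    calc P {ω : Ω | ∀ i ≤ k, Ttil i ω = t i ∧ Mtil (i + 1) ω = m i}
        ≤ P ({ω | Phi a t m k (fun i => ξ i ω)}
            ∪ ⋃ c : ℕ, {ω : Ω | ∀ N, (a + c) + csum (fun i => ξ i ω) N ≠ N}) :=
          measure_mono hEsub
      _ ≤ P {ω | Phi a t m k (fun i => ξ i ω)}
            + P (⋃ c : ℕ, {ω : Ω | ∀ N, (a + c) + csum (fun i => ξ i ω) N ≠ N}) :=
          measure_union_le _ _
      _ = P {ω | Phi a t m k (fun i => ξ i ω)} := by rw [hnull, add_zero]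
  rw [hPE, hPeq, wsum_Phi π a t m k]
  exact congrArg₂ (· * ·) (q_eq_convPow hb (t 0) a (m 0))
    (Finset.prod_congr rfl fun i _ => q_eq_convPow hb (t (i + 1)) (m i) (m (i + 1)))
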